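/- Let N ≥ 2 be an integer and let p, μ be real numbers with 1 < p < N and 0 ≤ μ < μ̄ := ((N−p)/p)^p. Let r₀ > 0, let w : (0,r₀) → ℝ be positive and continuously differentiable, and let g : (0,r₀) → ℝ be continuous with g(r) → 0 as r → 0+. Suppose that r·w'(r) = Γ_μ(w(r)^{1/(p−1)}) + g(r) for all 0 < r < r₀. Then the limit L = lim_{r→0+} w(r) exists, is finite, and satisfies L = γ₁^{p−1} or L = γ₂^{p−1}, where γ₁ and γ₂ are the two nonnegative zeros of Γ_μ. -/

import Mathlib

open Filter Topology Set

private lemma log_blowup (r₃ δ : ℝ) (hr₃ : 0 < r₃) (hδ : 0 < δ) (v v' : ℝ → ℝ)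
    (hv' : ∀ r ∈ Set.Ioo (0:ℝ) r₃, HasDerivAt v (v' r) r)
    (hpos : ∀ r ∈ Set.Ioo (0:ℝ) r₃, 0 < v r)
    (hlb : ∀ r ∈ Set.Ioo (0:ℝ) r₃, δ ≤ r * v' r) : False := by
  set rs := r₃ / 2 with hrs
  have hrs0 : 0 < rs := by positivity
  have hrsmem : rs ∈ Set.Ioo (0:ℝ) r₃ := ⟨hrs0, by rw [hrs]; linarith⟩
  set ρ := min (rs/2) (Real.exp (Real.log rs - v rs / δ - 1)) with hρdef
  have hρ0 : 0 < ρ := lt_min (by positivity) (Real.exp_pos _)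
  have hρrs : ρ < rs := lt_of_le_of_lt (min_le_left _ _) (by linarith)
  have hρmem : ρ ∈ Set.Ioo (0:ℝ) r₃ := ⟨hρ0, lt_trans hρrs hrsmem.2⟩
  have hlog : Real.log ρ ≤ Real.log rs - v rs / δ - 1 := by
    calc Real.log ρ ≤ Real.log (Real.exp (Real.log rs - v rs / δ - 1)) :=
          Real.log_le_log hρ0 (min_le_right _ _)
      _ = _ := Real.log_exp _
  set φ : ℝ → ℝ := fun r => v r - δ * Real.log r with hφ
  set φ' : ℝ → ℝ := fun r => v' r - δ * r⁻¹ with hφ'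
  have hder : ∀ x ∈ Set.Icc ρ rs, HasDerivAt φ (φ' x) x := by
    intro x hx
    have hx0 : 0 < x := lt_of_lt_of_le hρ0 hx.1
    exact (hv' x ⟨hx0, lt_of_le_of_lt hx.2 hrsmem.2⟩).sub
      ((Real.hasDerivAt_log hx0.ne').const_mul δ)
  obtain ⟨ξ, hξ, hξeq⟩ := exists_hasDerivAt_eq_slope φ φ' hρrs
    (fun x hx => (hder x hx).continuousAt.continuousWithinAt)
    (fun x hx => hder x (Set.mem_Icc_of_Ioo hx))
  have hξ0 : 0 < ξ := lt_trans hρ0 hξ.1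
  have hξmem : ξ ∈ Set.Ioo (0:ℝ) r₃ := ⟨hξ0, lt_trans hξ.2 hrsmem.2⟩
  have hφ'ξ : 0 ≤ φ' ξ := by
    have h1 := hlb ξ hξmem
    have h2 : ξ⁻¹ * δ ≤ ξ⁻¹ * (ξ * v' ξ) := mul_le_mul_of_nonneg_left h1 (by positivity)
    rw [inv_mul_cancel_left₀ hξ0.ne'] at h2
    simp only [hφ', sub_nonneg]
    calc δ * ξ⁻¹ = ξ⁻¹ * δ := by ring
      _ ≤ v' ξ := h2
  have h3 : (0:ℝ) ≤ (φ rs - φ ρ) / (rs - ρ) := hξeq ▸ hφ'ξ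
  have h4 : (0:ℝ) ≤ φ rs - φ ρ := by
    have := (le_div_iff₀ (sub_pos.2 hρrs)).1 h3
    linarith [this]
  have hδv : δ * (v rs / δ) = v rs := mul_div_cancel₀ _ hδ.ne'
  have h5 : δ * Real.log ρ ≤ δ * (Real.log rs - v rs / δ - 1) :=
    mul_le_mul_of_nonneg_left hlog hδ.le
  have h5' : δ * Real.log ρ ≤ δ * Real.log rs - v rs - δ := by nlinarith [h5, hδv]
  have h6 := hpos ρ hρmem
  simp only [hφ] at h4
  linarith

private lemma cross_up (r₁ : ℝ) (F w w' g : ℝ → ℝ)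
    (hw' : ∀ r ∈ Set.Ioo (0:ℝ) r₁, HasDerivAt w (w' r) r)
    (hode : ∀ r ∈ Set.Ioo (0:ℝ) r₁, r * w' r = F (w r) + g r)
    (x : ℝ) (hFx : 0 < F x)
    (hgb : ∀ r ∈ Set.Ioo (0:ℝ) r₁, |g r| < F x)
    (r' : ℝ) (hr' : r' ∈ Set.Ioo (0:ℝ) r₁) (hwr' : w r' ≤ x) :
    ∀ r ∈ Set.Ioc (0:ℝ) r', w r ≤ x := by
  intro r hr
  by_contra hcon
  push_neg at hcon
  have hrr' : r < r' := by
    rcases lt_or_eq_of_le hr.2 with h | h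
    · exact h
    · exact absurd hwr' (by rw [← h]; linarith)
  set S := {s : ℝ | s ∈ Set.Icc r r' ∧ w s ≤ x} with hS
  have hr'S : r' ∈ S := ⟨⟨hrr'.le, le_refl _⟩, hwr'⟩
  have hSne : S.Nonempty := ⟨r', hr'S⟩
  have hSbdd : BddBelow S := ⟨r, fun s hs => hs.1.1⟩
  set s := sInf S with hsdef
  have hs1 : r ≤ s := le_csInf hSne (fun t ht => ht.1.1)
  have hs2 : s ≤ r' := csInf_le hSbdd hr'S
  have hsIoo : s ∈ Set.Ioo (0:ℝ) r₁ :=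
    ⟨lt_of_lt_of_le hr.1 hs1, lt_of_le_of_lt hs2 hr'.2⟩
  have hscl : s ∈ closure S := csInf_mem_closure hSne hSbdd
  haveI hneS : (𝓝[S] s).NeBot := mem_closure_iff_nhdsWithin_neBot.1 hscl
  have hcw : ContinuousAt w s := (hw' s hsIoo).continuousAt
  have hwsle : w s ≤ x := le_of_tendsto hcw.continuousWithinAt
    (Filter.eventually_of_mem (self_mem_nhdsWithin : S ∈ 𝓝[S] s)
      (fun t ht => ht.2))
  have hrs : r < s := by
    rcases lt_or_eq_of_le hs1 with h | h
    · exact h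
    · exact absurd hwsle (by rw [← h]; linarith)
  have hgt : ∀ t, r ≤ t → t < s → x < w t := by
    intro t h1 h2
    by_contra hle
    push_neg at hle
    exact absurd (csInf_le hSbdd ⟨⟨h1, h2.le.trans hs2⟩, hle⟩) (not_le.2 h2)
  have hcl2 : s ∈ closure (Set.Ioo r s) := by
    rw [closure_Ioo hrs.ne]; exact ⟨hrs.le, le_refl _⟩
  haveI hne2 : (𝓝[Set.Ioo r s] s).NeBot := mem_closure_iff_nhdsWithin_neBot.1 hcl2
  have hwsge : x ≤ w s := ge_of_tendsto hcw.continuousWithinAt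
    (Filter.eventually_of_mem (self_mem_nhdsWithin : Set.Ioo r s ∈ 𝓝[Set.Ioo r s] s)
      (fun t ht => (hgt t ht.1.le ht.2).le))
  have hwsx : w s = x := le_antisymm hwsle hwsge
  have hslope : Filter.Tendsto (slope w s) (𝓝[Set.Ioo r s] s) (𝓝 (w' s)) :=
    (hasDerivAt_iff_tendsto_slope.1 (hw' s hsIoo)).mono_left
      (nhdsWithin_mono s (fun t ht => ne_of_lt ht.2))
  have hw's : w' s ≤ 0 := by
    refine le_of_tendsto hslope
      (Filter.eventually_of_mem (self_mem_nhdsWithin : Set.Ioo r s ∈ 𝓝[Set.Ioo r s] s)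
        (fun t ht => ?_))
    have h1 : 0 < w t - w s := by
      have := hgt t ht.1.le ht.2; rw [hwsx]; linarith
    have h2 : t - s < 0 := sub_neg.2 ht.2
    rw [slope_def_field]
    exact (div_neg_of_pos_of_neg h1 h2).le
  have hodes := hode s hsIoo
  rw [hwsx] at hodes
  have hgs := abs_lt.1 (hgb s hsIoo)
  have hpos : 0 < s * w' s := by rw [hodes]; linarith
  nlinarith [hsIoo.1, hw's]

private lemma cross_down (r₁ : ℝ) (F w w' g : ℝ → ℝ)
    (hw' : ∀ r ∈ Set.Ioo (0:ℝ) r₁, HasDerivAt w (w' r) r)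
    (hode : ∀ r ∈ Set.Ioo (0:ℝ) r₁, r * w' r = F (w r) + g r)
    (x : ℝ) (hFx : F x < 0)
    (hgb : ∀ r ∈ Set.Ioo (0:ℝ) r₁, |g r| < -F x)
    (r' : ℝ) (hr' : r' ∈ Set.Ioo (0:ℝ) r₁) (hwr' : x ≤ w r') :
    ∀ r ∈ Set.Ioc (0:ℝ) r', x ≤ w r := by
  have key := cross_up r₁ (fun y => -F (-y)) (fun r => -w r) (fun r => -w' r)
    (fun r => -g r)
    (fun r hrm => (hw' r hrm).neg)
    (fun r hrm => by have := hode r hrm; simp only [neg_neg]; linarith)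
    (-x) (by simpa using hFx)
    (fun r hrm => by simpa [abs_neg] using hgb r hrm)
    r' hr' (by simpa using hwr')
  intro r hr
  have := key r hr
  simpa using this
theorem stmt_7
    (N : ℕ) (hN : 2 ≤ N) (p μ : ℝ)
    (hp1 : 1 < p) (hpN : p < N)
    (hμ0 : 0 ≤ μ) (hμ : μ < (((N : ℝ) - p) / p) ^ p)
    (γ₁ γ₂ : ℝ)
    (hγ₁ : 0 ≤ γ₁ ∧ γ₁ < ((N : ℝ) - p) / p ∧
      γ₁ ^ (p - 1) * ((p - 1) * γ₁ - ((N : ℝ) - p)) + μ = 0)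
    (hγ₂ : ((N : ℝ) - p) / p < γ₂ ∧ γ₂ ≤ ((N : ℝ) - p) / (p - 1) ∧
      γ₂ ^ (p - 1) * ((p - 1) * γ₂ - ((N : ℝ) - p)) + μ = 0)
    (r₀ : ℝ) (hr₀ : 0 < r₀)
    (w w' g : ℝ → ℝ)
    (hw_pos : ∀ r : ℝ, 0 < r → r < r₀ → 0 < w r)
    (hw' : ∀ r : ℝ, 0 < r → r < r₀ → HasDerivAt w (w' r) r)
    (hw'c : ContinuousOn w' (Ioo 0 r₀))
    (hg : ContinuousOn g (Ioo 0 r₀))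
    (hg0 : Tendsto g (𝓝[>] 0) (𝓝 0))
    (heq : ∀ r : ℝ, 0 < r → r < r₀ →
      r * w' r =
        (w r ^ ((1 : ℝ) / (p - 1))) ^ (p - 1) *
            ((p - 1) * w r ^ ((1 : ℝ) / (p - 1)) - ((N : ℝ) - p)) + μ + g r) :
    ∃ L : ℝ, Tendsto w (𝓝[>] 0) (𝓝 L) ∧
      (L = γ₁ ^ (p - 1) ∨ L = γ₂ ^ (p - 1)) := by
  obtain ⟨hγ₁0, hγ₁m, hγ₁z⟩ := hγ₁
  obtain ⟨hγ₂m, hγ₂ub, hγ₂z⟩ := hγ₂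
  have hp0 : 0 < p := by linarith
  have hq0 : 0 < p - 1 := by linarith
  have hqne : p - 1 ≠ 0 := hq0.ne'
  set A : ℝ := (N : ℝ) - p with hA
  have hA0 : 0 < A := by
    have : (p : ℝ) < (N : ℝ) := hpN
    simp only [hA]; linarith
  set m : ℝ := A / p with hm
  have hm0 : 0 < m := div_pos hA0 hp0
  set Γ : ℝ → ℝ := fun γ => γ ^ (p - 1) * ((p - 1) * γ - A) + μ with hΓ
  have hΓγ₁ : Γ γ₁ = 0 := hγ₁z
  have hΓγ₂ : Γ γ₂ = 0 := hγ₂z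
  -- derivative of Γ
  have hΓderiv : ∀ γ : ℝ, 0 < γ →
      HasDerivAt Γ ((p - 1) * γ ^ (p - 2) * (p * γ - A)) γ := by
    intro γ hγ
    have h1 : HasDerivAt (fun γ : ℝ => γ ^ (p - 1)) ((p - 1) * γ ^ (p - 1 - 1)) γ :=
      Real.hasDerivAt_rpow_const (Or.inl hγ.ne')
    have h2 : HasDerivAt (fun γ : ℝ => (p - 1) * γ - A) (p - 1) γ := by
      simpa using ((hasDerivAt_id γ).const_mul (p - 1)).sub_const A
    have h3 := (h1.mul h2).add_const μ
    refine h3.congr_deriv ?_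
    have hpow : γ ^ (p - 1) = γ ^ (p - 2) * γ := by
      rw [show p - 1 = p - 2 + 1 by ring, Real.rpow_add_one hγ.ne']
    have hexp : p - 1 - 1 = p - 2 := by ring
    rw [hpow, hexp]
    ring
  have hΓca : ∀ γ : ℝ, ContinuousAt Γ γ := by
    intro γ
    have h1 : ContinuousAt (fun γ : ℝ => γ ^ (p - 1)) γ :=
      Real.continuousAt_rpow_const γ _ (Or.inr hq0.le)
    exact (h1.mul (((continuousAt_id.const_mul (p - 1))).sub continuousAt_const)).add
      continuousAt_const
  have hanti : StrictAntiOn Γ (Set.Icc 0 m) := by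
    apply strictAntiOn_of_deriv_neg (convex_Icc 0 m)
      (fun x _ => (hΓca x).continuousWithinAt)
    intro x hx
    rw [interior_Icc] at hx
    rw [(hΓderiv x hx.1).deriv]
    have hxp : 0 < x ^ (p - 2) := Real.rpow_pos_of_pos hx.1 _
    have hxm : x * p < A := by
      have := (lt_div_iff₀ hp0).1 hx.2
      linarith
    apply mul_neg_of_pos_of_neg (mul_pos hq0 hxp)
    linarith
  have hmono : StrictMonoOn Γ (Set.Ici m) := by
    apply strictMonoOn_of_deriv_pos (convex_Ici m)
      (fun x _ => (hΓca x).continuousWithinAt)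
    intro x hx
    rw [interior_Ici] at hx
    have hx0 : 0 < x := lt_trans hm0 hx
    rw [(hΓderiv x hx0).deriv]
    have hxp : 0 < x ^ (p - 2) := Real.rpow_pos_of_pos hx0 _
    have hxm : A < x * p := by
      have := (div_lt_iff₀ hp0).1 hx
      linarith
    apply mul_pos (mul_pos hq0 hxp)
    linarith
  have hΓzero : ∀ γ : ℝ, 0 ≤ γ → Γ γ = 0 → γ = γ₁ ∨ γ = γ₂ := by
    intro γ hγ0 hγz
    rcases le_total γ m with h | h
    · left
      exact hanti.injOn ⟨hγ0, h⟩ ⟨hγ₁0, hγ₁m.le⟩ (hγz.trans hΓγ₁.symm)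
    · right
      exact hmono.injOn h hγ₂m.le (hγz.trans hΓγ₂.symm)
  -- the function Φ
  set Φ : ℝ → ℝ := fun y => y * ((p - 1) * y ^ ((1 : ℝ) / (p - 1)) - A) + μ with hΦdef
  have hΦΓ : ∀ y : ℝ, 0 ≤ y → Φ y = Γ (y ^ ((1 : ℝ) / (p - 1))) := by
    intro y hy
    simp only [hΦdef, hΓ]
    rw [one_div, Real.rpow_inv_rpow hy hqne]
  have hγ₂0 : 0 < γ₂ := lt_trans hm0 hγ₂m
  set b := γ₂ ^ (p - 1) with hbdef
  have hbpos : 0 < b := Real.rpow_pos_of_pos hγ₂0 _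
  have hbinv : b ^ ((1 : ℝ) / (p - 1)) = γ₂ := by
    rw [hbdef, one_div, Real.rpow_rpow_inv hγ₂0.le hqne]
  have hexp0 : (0:ℝ) < (1 : ℝ) / (p - 1) := by positivity
  have hΦgt : ∀ y, b < y → 0 < Φ y := by
    intro y hy
    have hy0 : 0 ≤ y := le_trans hbpos.le hy.le
    rw [hΦΓ y hy0]
    have h1 : γ₂ < y ^ ((1 : ℝ) / (p - 1)) := by
      rw [← hbinv]
      exact Real.rpow_lt_rpow hbpos.le hy hexp0
    have h2 := hmono (le_of_lt hγ₂m) (le_trans hγ₂m.le h1.le) h1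
    rw [hΓγ₂] at h2
    exact h2
  have hΦmono : ∀ y z, b ≤ y → y ≤ z → Φ y ≤ Φ z := by
    intro y z hy hz
    have hy0 : 0 ≤ y := le_trans hbpos.le hy
    have hz0 : 0 ≤ z := le_trans hy0 hz
    rw [hΦΓ y hy0, hΦΓ z hz0]
    have h1 : γ₂ ≤ y ^ ((1 : ℝ) / (p - 1)) := by
      rw [← hbinv]
      exact Real.rpow_le_rpow hbpos.le hy hexp0.le
    have h2 : y ^ ((1 : ℝ) / (p - 1)) ≤ z ^ ((1 : ℝ) / (p - 1)) :=
      Real.rpow_le_rpow hy0 hz hexp0.le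
    exact hmono.monotoneOn (le_trans hγ₂m.le h1) (le_trans (le_trans hγ₂m.le h1) h2) h2
  have hΦzero : ∀ y, 0 ≤ y → Φ y = 0 → y = γ₁ ^ (p - 1) ∨ y = b := by
    intro y hy hz
    rw [hΦΓ y hy] at hz
    have hynn : 0 ≤ y ^ ((1 : ℝ) / (p - 1)) := Real.rpow_nonneg hy _
    rcases hΓzero _ hynn hz with h | h
    · left; rw [← h, one_div, Real.rpow_inv_rpow hy hqne]
    · right; rw [hbdef, ← h, one_div, Real.rpow_inv_rpow hy hqne]
  have hΦca : ∀ y : ℝ, ContinuousAt Φ y := by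
    intro y
    have h1 : ContinuousAt (fun y : ℝ => y ^ ((1 : ℝ) / (p - 1))) y :=
      Real.continuousAt_rpow_const y _ (Or.inr hexp0.le)
    exact (continuousAt_id.mul ((h1.const_mul (p - 1)).sub continuousAt_const)).add
      continuousAt_const
  clear_value A m Γ Φ b
  -- the ODE in terms of Φ
  have hode : ∀ r ∈ Set.Ioo (0:ℝ) r₀, r * w' r = Φ (w r) + g r := by
    intro r hr
    have h1 := heq r hr.1 hr.2
    have h2 : (w r ^ ((1 : ℝ) / (p - 1))) ^ (p - 1) = w r := by
      rw [one_div]; exact Real.rpow_inv_rpow (hw_pos r hr.1 hr.2).le hqne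
    rw [h2] at h1
    rw [h1]
    simp only [hΦdef]
  -- smallness of g
  have hgsmall : ∀ ε : ℝ, 0 < ε → ∃ r₁, 0 < r₁ ∧ r₁ ≤ r₀ ∧
      ∀ r ∈ Set.Ioo (0:ℝ) r₁, |g r| < ε := by
    intro ε hε
    have h1 : ∀ᶠ r in 𝓝[>] (0:ℝ), |g r| < ε := by
      have := Metric.tendsto_nhds.mp hg0 ε hε
      simpa [Real.dist_eq] using this
    obtain ⟨u, hu, hsub⟩ := mem_nhdsGT_iff_exists_Ioo_subset.1 h1
    refine ⟨min u r₀, lt_min hu hr₀, min_le_right _ _, ?_⟩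
    intro r hr
    exact hsub ⟨hr.1, lt_of_lt_of_le hr.2 (min_le_left _ _)⟩
  -- Step 1 : upper bound
  obtain ⟨c, hcdef⟩ : ∃ c : ℝ, c = b + 1 := ⟨_, rfl⟩
  have hΦc : 0 < Φ c := hΦgt c (by linarith)
  obtain ⟨r₁, hr₁0, hr₁r₀, hgr₁⟩ := hgsmall (Φ c / 2) (by positivity)
  have hsub₁ : Set.Ioo (0:ℝ) r₁ ⊆ Set.Ioo 0 r₀ :=
    fun t ht => ⟨ht.1, lt_of_lt_of_le ht.2 hr₁r₀⟩
  obtain ⟨r', hr'mem, hwle⟩ :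
      ∃ r', (r' ∈ Set.Ioo (0:ℝ) r₁) ∧ ∀ r ∈ Set.Ioc (0:ℝ) r', w r ≤ c := by
    by_cases hcase : ∀ r ∈ Set.Ioo (0:ℝ) r₁, c < w r
    · exfalso
      apply log_blowup r₁ (Φ c / 2) hr₁0 (by positivity) w w'
        (fun r hr => hw' r (hsub₁ hr).1 (hsub₁ hr).2)
        (fun r hr => hw_pos r (hsub₁ hr).1 (hsub₁ hr).2)
      intro r hr
      have h1 := hode r (hsub₁ hr)
      have h2 := hΦmono c (w r) (by linarith) (hcase r hr).le
      obtain ⟨h3a, h3b⟩ := abs_lt.1 (hgr₁ r hr)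
      rw [h1]
      linarith [h2, h3a]
    · push_neg at hcase
      obtain ⟨r', hr'mem, hr'le⟩ := hcase
      refine ⟨r', hr'mem, ?_⟩
      exact cross_up r₁ Φ w w' g (fun r hr => hw' r (hsub₁ hr).1 (hsub₁ hr).2)
        (fun r hr => hode r (hsub₁ hr)) c hΦc
        (fun r hr => lt_of_lt_of_le (hgr₁ r hr) (by linarith)) r' hr'mem hr'le
  -- eventual bounds
  have hIooF : ∀ u : ℝ, 0 < u → Set.Ioo (0:ℝ) u ∈ 𝓝[>] (0:ℝ) :=
    fun u hu => Ioo_mem_nhdsGT_of_mem ⟨le_refl 0, hu⟩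
  have hevub : ∀ᶠ r in 𝓝[>] (0:ℝ), w r ≤ c :=
    Filter.eventually_of_mem (hIooF r' hr'mem.1) (fun t ht => hwle t ⟨ht.1, ht.2.le⟩)
  have hevlb : ∀ᶠ r in 𝓝[>] (0:ℝ), 0 ≤ w r :=
    Filter.eventually_of_mem (hIooF r₀ hr₀) (fun t ht => (hw_pos t ht.1 ht.2).le)
  have hbddub : (𝓝[>] (0:ℝ)).IsBoundedUnder (· ≤ ·) w := ⟨c, eventually_map.2 hevub⟩
  have hbddlb : (𝓝[>] (0:ℝ)).IsBoundedUnder (· ≥ ·) w := ⟨0, eventually_map.2 hevlb⟩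
  obtain ⟨l, hldef⟩ : ∃ l : ℝ, l = Filter.liminf w (𝓝[>] (0:ℝ)) := ⟨_, rfl⟩
  obtain ⟨L, hLdef⟩ : ∃ L : ℝ, L = Filter.limsup w (𝓝[>] (0:ℝ)) := ⟨_, rfl⟩
  have hl0 : 0 ≤ l := hldef ▸ le_liminf_of_le hbddub.isCoboundedUnder_ge hevlb
  have hlleL : l ≤ L := hldef ▸ hLdef ▸ Filter.liminf_le_limsup hbddub hbddlb
  -- Step 3 : liminf = limsup
  have hleq : l = L := by
    by_contra hne
    have hlltL : l < L := lt_of_le_of_ne hlleL hne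
    obtain ⟨x, hxl, hxL, hxa, hxb⟩ :
        ∃ x, l < x ∧ x < L ∧ x ≠ γ₁ ^ (p - 1) ∧ x ≠ b := by
      obtain ⟨x₁, hx₁⟩ : ∃ t : ℝ, t = l + (L - l) / 4 := ⟨_, rfl⟩
      obtain ⟨x₂, hx₂⟩ : ∃ t : ℝ, t = l + (L - l) / 2 := ⟨_, rfl⟩
      obtain ⟨x₃, hx₃⟩ : ∃ t : ℝ, t = l + 3 * (L - l) / 4 := ⟨_, rfl⟩
      by_cases e1 : x₁ = γ₁ ^ (p - 1) ∨ x₁ = b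
      · by_cases e2 : x₂ = γ₁ ^ (p - 1) ∨ x₂ = b
        · refine ⟨x₃, by rw [hx₃]; linarith, by rw [hx₃]; linarith, ?_, ?_⟩ <;>
            rcases e1 with e1 | e1 <;> rcases e2 with e2 | e2 <;> intro hcon <;>
            rw [hx₁] at e1 <;> rw [hx₂] at e2 <;> rw [hx₃] at hcon <;> linarith
        · rw [not_or] at e2
          exact ⟨x₂, by rw [hx₂]; linarith, by rw [hx₂]; linarith, e2.1, e2.2⟩
      · rw [not_or] at e1
        exact ⟨x₁, by rw [hx₁]; linarith, by rw [hx₁]; linarith, e1.1, e1.2⟩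
    have hx0 : 0 ≤ x := le_trans hl0 hxl.le
    have hΦx : Φ x ≠ 0 := by
      intro hz
      rcases hΦzero x hx0 hz with h | h
      · exact hxa h
      · exact hxb h
    rcases lt_or_gt_of_ne hΦx with hneg | hpos
    · -- Φ x < 0 : w eventually ≥ x, contradicting l < x
      obtain ⟨r₂, hr₂0, hr₂r₀, hgr₂⟩ := hgsmall (-Φ x) (by linarith)
      have hsub₂ : Set.Ioo (0:ℝ) r₂ ⊆ Set.Ioo 0 r₀ :=
        fun t ht => ⟨ht.1, lt_of_lt_of_le ht.2 hr₂r₀⟩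
      have hfreq : ∃ᶠ r in 𝓝[>] (0:ℝ), x < w r :=
        Filter.frequently_lt_of_lt_limsup hbddlb.isCoboundedUnder_le (hLdef ▸ hxL)
      obtain ⟨rr, hrrgt, hrrmem⟩ :=
        (hfreq.and_eventually (Filter.eventually_of_mem (hIooF r₂ hr₂0)
          (fun t ht => ht))).exists
      have hge := cross_down r₂ Φ w w' g
        (fun r hr => hw' r (hsub₂ hr).1 (hsub₂ hr).2)
        (fun r hr => hode r (hsub₂ hr)) x hneg (fun r hr => hgr₂ r hr)
        rr hrrmem hrrgt.le
      have : x ≤ l := hldef ▸ le_liminf_of_le hbddub.isCoboundedUnder_ge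
        (Filter.eventually_of_mem (hIooF rr hrrmem.1)
          (fun t ht => hge t ⟨ht.1, ht.2.le⟩))
      linarith
    · -- Φ x > 0 : w eventually ≤ x, contradicting x < L
      obtain ⟨r₂, hr₂0, hr₂r₀, hgr₂⟩ := hgsmall (Φ x) hpos
      have hsub₂ : Set.Ioo (0:ℝ) r₂ ⊆ Set.Ioo 0 r₀ :=
        fun t ht => ⟨ht.1, lt_of_lt_of_le ht.2 hr₂r₀⟩
      have hfreq : ∃ᶠ r in 𝓝[>] (0:ℝ), w r < x :=
        Filter.frequently_lt_of_liminf_lt hbddub.isCoboundedUnder_ge (hldef ▸ hxl)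
      obtain ⟨rr, hrrlt, hrrmem⟩ :=
        (hfreq.and_eventually (Filter.eventually_of_mem (hIooF r₂ hr₂0)
          (fun t ht => ht))).exists
      have hle := cross_up r₂ Φ w w' g
        (fun r hr => hw' r (hsub₂ hr).1 (hsub₂ hr).2)
        (fun r hr => hode r (hsub₂ hr)) x hpos (fun r hr => hgr₂ r hr)
        rr hrrmem hrrlt.le
      have : L ≤ x := hLdef ▸ Filter.limsup_le_of_le hbddlb.isCoboundedUnder_le
        (Filter.eventually_of_mem (hIooF rr hrrmem.1)
          (fun t ht => hle t ⟨ht.1, ht.2.le⟩))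
      linarith
  have hT : Filter.Tendsto w (𝓝[>] (0:ℝ)) (𝓝 l) :=
    tendsto_of_liminf_eq_limsup hldef.symm (hleq ▸ hLdef.symm) hbddub hbddlb
  -- Step 4 : Φ l = 0
  have hΦl : Φ l = 0 := by
    by_contra hne
    have hΦw : Filter.Tendsto (fun r => Φ (w r)) (𝓝[>] (0:ℝ)) (𝓝 (Φ l)) :=
      (hΦca l).tendsto.comp hT
    rcases lt_or_gt_of_ne hne with hneg | hpos
    · -- Φ l < 0
      obtain ⟨δ, hδdef⟩ : ∃ d : ℝ, d = -Φ l := ⟨_, rfl⟩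
      have hδ0 : 0 < δ := by rw [hδdef]; linarith
      have hev1 : ∀ᶠ r in 𝓝[>] (0:ℝ), Φ (w r) < -δ / 2 :=
        hΦw.eventually (eventually_lt_nhds (by rw [hδdef]; linarith))
      obtain ⟨r₂, hr₂0, hr₂r₀, hgr₂⟩ := hgsmall (δ / 4) (by positivity)
      obtain ⟨u, hu, hsubu⟩ := mem_nhdsGT_iff_exists_Ioo_subset.1 hev1
      obtain ⟨r₃, hr₃def⟩ : ∃ t : ℝ, t = min (min u r₂) r' := ⟨_, rfl⟩
      have hr₃0 : 0 < r₃ := hr₃def ▸ lt_min (lt_min hu hr₂0) hr'mem.1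
      have hsubr₃ : ∀ r ∈ Set.Ioo (0:ℝ) r₃,
          r ∈ Set.Ioo (0:ℝ) u ∧ r ∈ Set.Ioo (0:ℝ) r₂ ∧ r ∈ Set.Ioc (0:ℝ) r' := by
        intro r hr
        rw [hr₃def] at hr
        refine ⟨⟨hr.1, lt_of_lt_of_le hr.2 ((min_le_left _ _).trans (min_le_left _ _))⟩,
          ⟨hr.1, lt_of_lt_of_le hr.2 ((min_le_left _ _).trans (min_le_right _ _))⟩,
          ⟨hr.1, le_of_lt (lt_of_lt_of_le hr.2 (min_le_right _ _))⟩⟩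
      apply log_blowup r₃ (δ / 4) hr₃0 (by positivity)
        (fun r => c + 1 - w r) (fun r => -w' r)
      · intro r hr
        obtain ⟨h1, h2, h3⟩ := hsubr₃ r hr
        exact HasDerivAt.const_sub (c + 1)
          (hw' r h2.1 (lt_of_lt_of_le h2.2 hr₂r₀))
      · intro r hr
        obtain ⟨h1, h2, h3⟩ := hsubr₃ r hr
        have := hwle r h3
        show 0 < c + 1 - w r
        linarith
      · intro r hr
        obtain ⟨h1, h2, h3⟩ := hsubr₃ r hr
        have hΦr : Φ (w r) < -δ / 2 := hsubu h1
        have hgb := abs_lt.1 (hgr₂ r h2)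
        have hoder := hode r ⟨h2.1, lt_of_lt_of_le h2.2 hr₂r₀⟩
        have : r * (fun r => -w' r) r = -(r * w' r) := by ring
        rw [this, hoder]
        linarith
    · -- Φ l > 0
      have hev1 : ∀ᶠ r in 𝓝[>] (0:ℝ), Φ l / 2 < Φ (w r) :=
        hΦw.eventually (eventually_gt_nhds (by linarith))
      obtain ⟨r₂, hr₂0, hr₂r₀, hgr₂⟩ := hgsmall (Φ l / 4) (by positivity)
      obtain ⟨u, hu, hsubu⟩ := mem_nhdsGT_iff_exists_Ioo_subset.1 hev1
      obtain ⟨r₃, hr₃def⟩ : ∃ t : ℝ, t = min u r₂ := ⟨_, rfl⟩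
      have hr₃0 : 0 < r₃ := hr₃def ▸ lt_min hu hr₂0
      apply log_blowup r₃ (Φ l / 4) hr₃0 (by positivity) w w'
      · intro r hr
        rw [hr₃def] at hr
        exact hw' r hr.1
          (lt_of_lt_of_le (lt_of_lt_of_le hr.2 (min_le_right _ _)) hr₂r₀)
      · intro r hr
        rw [hr₃def] at hr
        exact hw_pos r hr.1
          (lt_of_lt_of_le (lt_of_lt_of_le hr.2 (min_le_right _ _)) hr₂r₀)
      · intro r hr
        rw [hr₃def] at hr
        have h1 : r ∈ Set.Ioo (0:ℝ) u := ⟨hr.1, lt_of_lt_of_le hr.2 (min_le_left _ _)⟩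
        have h2 : r ∈ Set.Ioo (0:ℝ) r₂ := ⟨hr.1, lt_of_lt_of_le hr.2 (min_le_right _ _)⟩
        have hΦr : Φ l / 2 < Φ (w r) := hsubu h1
        have hgb := abs_lt.1 (hgr₂ r h2)
        have hoder := hode r ⟨h2.1, lt_of_lt_of_le h2.2 hr₂r₀⟩
        rw [hoder]
        linarith
  rcases hΦzero l hl0 hΦl with h | h
  · exact ⟨l, hT, Or.inl h⟩
  · exact ⟨l, hT, Or.inr h⟩
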